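/- Let A = kQ/I be a gentle algebra. Then its CM-Auslander algebra A^CMA = kQ^CMA/I^CMA, obtained by splitting every arrow on a gentle relation cycle and adjusting the length-two relations, is again a gentle algebra. -/

import Mathlib

/-! ## Combinatorics of bounded quivers, string algebras -/

structure QuivData where
  V : Type
  E : Type
  s : E → V
  t : E → V

namespace QuivData

variable {Q : QuivData}

/-- A (possibly trivial) path: a chosen source vertex together with a list of arrows. -/
structure Pth (Q : QuivData) where
  src : Q.V
  arrows : List Q.E

/-- Target of a path: target of its last arrow, or the source for a trivial path. -/
def Pth.tgt (p : Pth Q) : Q.V := (p.arrows.getLast?).elim p.src Q.t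

/-- A path is valid if consecutive arrows compose and the first arrow starts at `src`. -/
def Pth.valid (p : Pth Q) : Prop :=
  (p.arrows.Chain' fun a b => Q.t a = Q.s b) ∧ ∀ a ∈ p.arrows.head?, Q.s a = p.src

/-- Concatenation of paths (as data). -/
def Pth.comp (p q : Pth Q) : Pth Q := ⟨p.src, p.arrows ++ q.arrows⟩

def Pth.length (p : Pth Q) : ℕ := p.arrows.length

/-- A path is non-trivial if it has at least one arrow. -/
def Pth.Nontriv (p : Pth Q) : Prop := p.arrows ≠ []

/-- Trivial path at a vertex. -/
def triv (Q : QuivData) (v : Q.V) : Pth Q := ⟨v, []⟩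

/-- The length-one path given by an arrow. -/
def single (Q : QuivData) (a : Q.E) : Pth Q := ⟨Q.s a, [a]⟩

/-- A list of arrows lies in the monomial ideal generated by `gens` iff some
non-trivial generator occurs as a contiguous segment. -/
def memL (gens : Set (Pth Q)) (l : List Q.E) : Prop :=
  ∃ r ∈ gens, r.arrows ≠ [] ∧ r.arrows <:+: l

/-- Membership of a path in the monomial ideal generated by `gens`. -/
def memI (gens : Set (Pth Q)) (p : Pth Q) : Prop := memL gens p.arrows

/-- `p` is a generator (minimal relation) of the monomial ideal: it lies in the
ideal but no proper subpath does. -/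
def IsGen (gens : Set (Pth Q)) (p : Pth Q) : Prop :=
  p.valid ∧ memI gens p ∧
  ∀ l : List Q.E, l <:+: p.arrows → l ≠ p.arrows → ¬ memL gens l

/-- `(Q, gens)` is a string quiver. -/
def IsStringQuiver (Q : QuivData) (gens : Set (Pth Q)) : Prop :=
  Finite Q.V ∧ Finite Q.E ∧
  (∀ r ∈ gens, r.valid ∧ 2 ≤ r.length) ∧
  (∀ v : Q.V, {a : Q.E | Q.s a = v}.ncard ≤ 2 ∧ {a : Q.E | Q.t a = v}.ncard ≤ 2) ∧
  (∀ a b c : Q.E, Q.t a = Q.s b → Q.t a = Q.s c →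
    ¬ memL gens [a, b] → ¬ memL gens [a, c] → b = c) ∧
  (∀ a b c : Q.E, Q.t b = Q.s a → Q.t c = Q.s a →
    ¬ memL gens [b, a] → ¬ memL gens [c, a] → b = c) ∧
  (∃ N : ℕ, ∀ p : Pth Q, p.valid → N ≤ p.length → memI gens p)

/-- `(Q, gens)` is a gentle quiver. -/
def IsGentleQuiver (Q : QuivData) (gens : Set (Pth Q)) : Prop :=
  IsStringQuiver Q gens ∧
  (∀ r ∈ gens, r.length = 2) ∧
  (∀ a b c : Q.E, Q.t a = Q.s b → Q.t a = Q.s c →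
    memL gens [a, b] → memL gens [a, c] → b = c) ∧
  (∀ a b c : Q.E, Q.t b = Q.s a → Q.t c = Q.s a →
    memL gens [b, a] → memL gens [c, a] → b = c)

/-- Perfect pair of paths (Chen). -/
def PerfectPair (gens : Set (Pth Q)) (p q : Pth Q) : Prop :=
  p.valid ∧ q.valid ∧ p.Nontriv ∧ q.Nontriv ∧ p.tgt = q.src ∧
  memI gens (p.comp q) ∧
  (∀ r : Pth Q, r.valid → r.Nontriv → p.tgt = r.src → memI gens (p.comp r) →
    q.arrows <+: r.arrows) ∧
  (∀ r : Pth Q, r.valid → r.Nontriv → r.tgt = q.src → memI gens (r.comp q) →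
    p.arrows <:+ r.arrows)

/-- A perfect path sequence, presented cyclically. -/
def IsPPS (gens : Set (Pth Q)) {t : ℕ} (P : ZMod t → Pth Q) : Prop :=
  0 < t ∧ ∀ i, PerfectPair gens (P i) (P (i + 1))

/-- A perfect path: a path occurring in some perfect path sequence. -/
def IsPerfectPath (gens : Set (Pth Q)) (p : Pth Q) : Prop :=
  ∃ (t : ℕ) (P : ZMod t → Pth Q), IsPPS gens P ∧ P 0 = p

/-- Cyclic successor entry in a list. -/
def nextIdx {α : Type} (l : List α) (i : Fin l.length) : α :=
  l.get ⟨((i : ℕ) + 1) % l.length, Nat.mod_lt _ i.pos⟩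

/-- An oriented cycle: closed valid non-trivial path with pairwise distinct arrows. -/
def IsCycle (c : Pth Q) : Prop := c.valid ∧ c.Nontriv ∧ c.arrows.Nodup ∧ c.tgt = c.src

/-- A path lies on a cycle if its arrow sequence is a contiguous segment of
some repetition of the cycle. -/
def OnCycle (c p : Pth Q) : Prop :=
  ∃ k : ℕ, p.arrows <:+: (List.replicate k c.arrows).flatten

/-- A gentle relation cycle: an oriented cycle all of whose consecutive
compositions of length two lie in the ideal, and such that every generator
meeting the cycle has length two. -/
def IsGentleRelCycle (gens : Set (Pth Q)) (c : Pth Q) : Prop :=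
  IsCycle c ∧
  (∀ i : Fin c.arrows.length, memL gens [c.arrows.get i, nextIdx c.arrows i]) ∧
  (∀ r ∈ gens, (∃ a ∈ r.arrows, a ∈ c.arrows) → r.length = 2)

/-- An arrow lying on some gentle relation cycle. -/
def OnGRC (gens : Set (Pth Q)) (a : Q.E) : Prop :=
  ∃ c : Pth Q, IsGentleRelCycle gens c ∧ a ∈ c.arrows

/-- G-condition: every cycle supporting a perfect path sequence is a gentle
relation cycle. -/
def GCondition (Q : QuivData) (gens : Set (Pth Q)) : Prop :=
  ∀ c : Pth Q, IsCycle c →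
    (∃ (t : ℕ) (P : ZMod t → Pth Q), IsPPS gens P ∧ ∀ i, OnCycle c (P i)) →
    IsGentleRelCycle gens c

/-- A presentation of the algebra `A` as `kQ/I` for the monomial ideal generated
by `gens`: a basis indexed by the nonzero paths, multiplying like paths. -/
structure StringAlgPres (k : Type) [Field k] (A : Type) [Ring A] [Algebra k A]
    (Q : QuivData) (gens : Set (Pth Q)) where
  bas : Module.Basis {p : Pth Q // p.valid ∧ ¬ memI gens p} k A
  mul_eq : ∀ (p q : {p : Pth Q // p.valid ∧ ¬ memI gens p})
      (h : (p.1.comp q.1).valid ∧ ¬ memI gens (p.1.comp q.1)),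
      p.1.tgt = q.1.src → bas p * bas q = bas ⟨p.1.comp q.1, h⟩
  mul_zero' : ∀ (p q : {p : Pth Q // p.valid ∧ ¬ memI gens p}),
      (p.1.tgt ≠ q.1.src ∨ memI gens (p.1.comp q.1)) → bas p * bas q = 0
  trivMem : ∀ v : Q.V, (triv Q v).valid ∧ ¬ memI gens (triv Q v)
  one_eq : 1 = ∑ᶠ v : Q.V, bas ⟨triv Q v, trivMem v⟩

end QuivData
/-! ## Gorenstein projective modules and homological notions -/

open CategoryTheory

namespace QuivData

/-- `M` is a Gorenstein-projective module: it is (isomorphic to) the image of a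
differential of a Hom(-,R)-exact acyclic complex of projectives. -/
def IsGP (R : Type) [Ring R] (M : ModuleCat.{0} R) : Prop :=
  ∃ (P : ℤ → ModuleCat.{0} R) (d : ∀ n, P n ⟶ P (n + 1)),
    (∀ n, Projective (P n)) ∧
    (∀ n, LinearMap.range (d n).hom = LinearMap.ker (d (n + 1)).hom) ∧
    (∀ (n : ℤ) (g : P (n + 1) ⟶ ModuleCat.of R R), d n ≫ g = 0 →
      ∃ h : P (n + 1 + 1) ⟶ ModuleCat.of R R, d (n + 1) ≫ h = g) ∧
    Nonempty (M ≃ₗ[R] LinearMap.range (d 0).hom)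

/-- Indecomposability of a module. -/
def IndecM (R : Type) [Ring R] (M : ModuleCat.{0} R) : Prop :=
  Nontrivial M ∧ ∀ N₁ N₂ : Submodule R M, IsCompl N₁ N₂ → N₁ = ⊥ ∨ N₂ = ⊥

/-- CM-finiteness: finitely many iso classes of f.g. indecomposable
Gorenstein-projective modules. -/
def CMFinite (R : Type) [Ring R] : Prop :=
  ∃ (n : ℕ) (rep : Fin n → ModuleCat.{0} R),
    ∀ M : ModuleCat.{0} R, Module.Finite R M → IndecM R M → IsGP R M →
      ∃ i, Nonempty (M ≅ rep i)

/-- CM-freeness: every f.g. Gorenstein-projective module is projective. -/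
def CMFree (R : Type) [Ring R] : Prop :=
  ∀ M : ModuleCat.{0} R, Module.Finite R M → IsGP R M → Projective M

/-- Representation-finiteness: finitely many iso classes of f.g.
indecomposable modules. -/
def RepFinite (R : Type) [Ring R] : Prop :=
  ∃ (n : ℕ) (rep : Fin n → ModuleCat.{0} R),
    ∀ M : ModuleCat.{0} R, Module.Finite R M → IndecM R M →
      ∃ i, Nonempty (M ≅ rep i)

/-- Projective dimension at most `n`. -/
def pdLE (R : Type) [Ring R] : ℕ → ModuleCat.{0} R → Prop
  | 0, M => Projective M
  | (n+1), M => ∃ (P : ModuleCat.{0} R) (f : P ⟶ M), Projective P ∧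
      Function.Surjective f ∧ pdLE R n (ModuleCat.of R (LinearMap.ker f.hom))

/-- Injective dimension at most `n`. -/
def idLE (R : Type) [Ring R] : ℕ → ModuleCat.{0} R → Prop
  | 0, M => Injective M
  | (n+1), M => ∃ (E : ModuleCat.{0} R) (f : M ⟶ E), Injective E ∧
      Function.Injective f ∧ idLE R n (ModuleCat.of R (E ⧸ LinearMap.range f.hom))

/-- Global dimension, valued in `ℕ∞`. -/
noncomputable def glDim (R : Type) [Ring R] : ℕ∞ :=
  sInf {n : ℕ∞ | ∃ m : ℕ, n = m ∧ ∀ M : ModuleCat.{0} R, pdLE R m M}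

/-- Self-injective dimension of `A` as a right `A`-module. -/
noncomputable def selfInjDimR (A : Type) [Ring A] : ℕ∞ :=
  sInf {n : ℕ∞ | ∃ m : ℕ, n = m ∧ idLE Aᵐᵒᵖ m (ModuleCat.of Aᵐᵒᵖ A)}

/-- Irreducibility of a morphism relative to the subcategory of objects
satisfying `P`. -/
def IrrIn {R : Type} [Ring R] (P : ModuleCat.{0} R → Prop) {X Y : ModuleCat.{0} R}
    (f : X ⟶ Y) : Prop :=
  (¬ ∃ g : Y ⟶ X, f ≫ g = 𝟙 X) ∧ (¬ ∃ g : Y ⟶ X, g ≫ f = 𝟙 Y) ∧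
  ∀ (Z : ModuleCat.{0} R) (g : X ⟶ Z) (h : Z ⟶ Y), P Z → f = g ≫ h →
    (∃ r : Z ⟶ X, g ≫ r = 𝟙 X) ∨ (∃ s : Y ⟶ Z, s ≫ h = 𝟙 Y)

/-- Membership in the square of the radical, relative to the subcategory of
objects satisfying `P` (for `X`, `Y` indecomposable). -/
def Rad2 {R : Type} [Ring R] (P : ModuleCat.{0} R → Prop) {X Y : ModuleCat.{0} R}
    (f : X ⟶ Y) : Prop :=
  ∃ (m : ℕ) (Z : Fin m → ModuleCat.{0} R) (g : ∀ i, X ⟶ Z i) (h : ∀ i, Z i ⟶ Y),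
    (∀ i, P (Z i)) ∧ (∀ i, ¬ ∃ r : Z i ⟶ X, g i ≫ r = 𝟙 X) ∧
    (∀ i, ¬ ∃ s : Y ⟶ Z i, s ≫ h i = 𝟙 Y) ∧ f = ∑ i, g i ≫ h i

end QuivData
/-! ## The CM-Auslander construction (gentle splitting), bands, forbidden paths -/

namespace QuivData

variable {Q : QuivData}

/-- The quiver of the CM-Auslander algebra obtained by splitting each arrow
lying on a gentle relation cycle. -/
def CMAQuiv (Q : QuivData) (gens : Set (Pth Q)) : QuivData where
  V := Q.V ⊕ {a : Q.E // OnGRC gens a}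
  E := {a : Q.E // ¬ OnGRC gens a} ⊕ ({a : Q.E // OnGRC gens a} ⊕ {a : Q.E // OnGRC gens a})
  s := fun e => match e with
    | Sum.inl a => Sum.inl (Q.s a.1)
    | Sum.inr (Sum.inl a) => Sum.inl (Q.s a.1)   -- α⁻ : x → v_α
    | Sum.inr (Sum.inr a) => Sum.inr a           -- α⁺ : v_α → y
  t := fun e => match e with
    | Sum.inl a => Sum.inl (Q.t a.1)
    | Sum.inr (Sum.inl a) => Sum.inr a
    | Sum.inr (Sum.inr a) => Sum.inl (Q.t a.1)

open scoped Classical in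
/-- The starred arrow in the interior of a path: split arrows become `α⁻α⁺`. -/
noncomputable def starMid (gens : Set (Pth Q)) (a : Q.E) : List (CMAQuiv Q gens).E :=
  if h : OnGRC gens a then [Sum.inr (Sum.inl ⟨a, h⟩), Sum.inr (Sum.inr ⟨a, h⟩)]
  else [Sum.inl ⟨a, h⟩]

open scoped Classical in
/-- The starred first arrow of a relation: a split arrow becomes `α⁺`. -/
noncomputable def starFirst (gens : Set (Pth Q)) (a : Q.E) : List (CMAQuiv Q gens).E :=
  if h : OnGRC gens a then [Sum.inr (Sum.inr ⟨a, h⟩)] else [Sum.inl ⟨a, h⟩]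

open scoped Classical in
/-- The starred last arrow of a relation: a split arrow becomes `α⁻`. -/
noncomputable def starLast (gens : Set (Pth Q)) (a : Q.E) : List (CMAQuiv Q gens).E :=
  if h : OnGRC gens a then [Sum.inr (Sum.inl ⟨a, h⟩)] else [Sum.inl ⟨a, h⟩]

/-- The starred arrow list of a relation. -/
noncomputable def starList (gens : Set (Pth Q)) (l : List Q.E) : List (CMAQuiv Q gens).E :=
  ((l.zipIdx.map Prod.swap).map fun x =>
    if x.1 = 0 then starFirst gens x.2
    else if x.1 = l.length - 1 then starLast gens x.2
    else starMid gens x.2).flatten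

open scoped Classical in
/-- The source of the starred path. -/
noncomputable def starSrc (gens : Set (Pth Q)) (p : Pth Q) : (CMAQuiv Q gens).V :=
  match p.arrows with
  | [] => Sum.inl p.src
  | a :: _ => if h : OnGRC gens a then Sum.inr ⟨a, h⟩ else Sum.inl p.src

/-- The starred path `℘*` of a relation `℘`. -/
noncomputable def starPath (gens : Set (Pth Q)) (p : Pth Q) : Pth (CMAQuiv Q gens) :=
  ⟨starSrc gens p, starList gens p.arrows⟩

/-- Two arrows consecutive on a common gentle relation cycle. -/
def ConsecGRC (gens : Set (Pth Q)) (α β : Q.E) : Prop :=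
  ∃ c : Pth Q, IsGentleRelCycle gens c ∧
    ∃ i : Fin c.arrows.length, c.arrows.get i = α ∧ nextIdx c.arrows i = β

/-- The relations of the CM-Auslander algebra of a string algebra satisfying
the G-condition: the paths `α⁺β⁻` for consecutive arrows on a gentle relation
cycle, together with the starred relations `℘*`. -/
def CMAgens (Q : QuivData) (gens : Set (Pth Q)) : Set (Pth (CMAQuiv Q gens)) :=
  {r | ∃ (α β : Q.E) (hα : OnGRC gens α) (hβ : OnGRC gens β), ConsecGRC gens α β ∧
        r = ⟨Sum.inr ⟨α, hα⟩, [Sum.inr (Sum.inr ⟨α, hα⟩), Sum.inr (Sum.inl ⟨β, hβ⟩)]⟩} ∪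
  {r | ∃ p : Pth Q, IsGen gens p ∧ r = starPath gens p}

/-- The relations of the CM-Auslander algebra of a gentle algebra: Case 1
(`α⁺β⁻` for consecutive arrows on a gentle relation cycle) and Case 2
(length-two relations neither of whose arrows lies on a gentle relation cycle). -/
def CMAgensG (Q : QuivData) (gens : Set (Pth Q)) : Set (Pth (CMAQuiv Q gens)) :=
  {r | ∃ (α β : Q.E) (hα : OnGRC gens α) (hβ : OnGRC gens β), ConsecGRC gens α β ∧
        r = ⟨Sum.inr ⟨α, hα⟩, [Sum.inr (Sum.inr ⟨α, hα⟩), Sum.inr (Sum.inl ⟨β, hβ⟩)]⟩} ∪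
  {r | ∃ (a b : Q.E) (ha : ¬ OnGRC gens a) (hb : ¬ OnGRC gens b),
        Q.t a = Q.s b ∧ memL gens [a, b] ∧
        r = ⟨Sum.inl (Q.s a), [Sum.inl ⟨a, ha⟩, Sum.inl ⟨b, hb⟩]⟩}

/-! ### Bands -/

/-- Source of a letter (an arrow or a formal inverse of an arrow). -/
def LSrc (Q : QuivData) : Q.E ⊕ Q.E → Q.V
  | Sum.inl a => Q.s a
  | Sum.inr a => Q.t a

/-- Target of a letter. -/
def LTgt (Q : QuivData) : Q.E ⊕ Q.E → Q.V
  | Sum.inl a => Q.t a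
  | Sum.inr a => Q.s a

/-- A composable walk. -/
def IsWalk (Q : QuivData) (l : List (Q.E ⊕ Q.E)) : Prop :=
  l.Chain' fun x y => LTgt Q x = LSrc Q y

/-- A reduced walk: no immediate backtracking. -/
def ReducedW (Q : QuivData) (l : List (Q.E ⊕ Q.E)) : Prop :=
  l.Chain' fun x y => (∀ a, ¬ (x = Sum.inl a ∧ y = Sum.inr a)) ∧
    (∀ a, ¬ (x = Sum.inr a ∧ y = Sum.inl a))

/-- All direct and inverse runs of the walk avoid the ideal. -/
def AvoidsI (Q : QuivData) (gens : Set (Pth Q)) (l : List (Q.E ⊕ Q.E)) : Prop :=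
  (∀ p : List Q.E, (p.map Sum.inl) <:+: l → ¬ memL gens p) ∧
  (∀ p : List Q.E, (p.map Sum.inr) <:+: l → ¬ memL gens p.reverse)

/-- A string: a reduced walk avoiding the ideal. -/
def IsStringWalk (Q : QuivData) (gens : Set (Pth Q)) (l : List (Q.E ⊕ Q.E)) : Prop :=
  IsWalk Q l ∧ ReducedW Q l ∧ AvoidsI Q gens l

/-- A band: a non-empty cyclic string whose square is a string, not a proper
power. -/
def IsBand (Q : QuivData) (gens : Set (Pth Q)) (l : List (Q.E ⊕ Q.E)) : Prop :=
  l ≠ [] ∧ IsStringWalk Q gens (l ++ l) ∧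
  ¬ ∃ (w : List (Q.E ⊕ Q.E)) (m : ℕ), 2 ≤ m ∧ l = (List.replicate m w).flatten

def HasBand (Q : QuivData) (gens : Set (Pth Q)) : Prop := ∃ l, IsBand Q gens l

/-! ### Forbidden paths and threads -/

/-- A forbidden path: either a non-trivial path all of whose consecutive
compositions lie in the ideal, or a trivial forbidden path at a suitable
vertex. -/
def IsForbidden (gens : Set (Pth Q)) (F : Pth Q) : Prop :=
  F.valid ∧
  ((F.arrows ≠ [] ∧ F.arrows.Chain' fun a b => memL gens [a, b]) ∨
   (F.arrows = [] ∧ {a : Q.E | Q.t a = F.src}.Subsingleton ∧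
     {a : Q.E | Q.s a = F.src}.Subsingleton ∧
     ∀ α β : Q.E, Q.t α = F.src → Q.s β = F.src → memL gens [α, β]))

/-- A forbidden thread: a maximal forbidden path. -/
def IsForbThread (gens : Set (Pth Q)) (F : Pth Q) : Prop :=
  IsForbidden gens F ∧
  (∀ (β : Q.E) (a : Q.E), F.arrows.head? = some a → Q.t β = F.src → ¬ memL gens [β, a]) ∧
  (∀ (β : Q.E) (a : Q.E), F.arrows.getLast? = some a → Q.s β = F.tgt → ¬ memL gens [a, β])

end QuivData

/-! ## Auxiliary lemmas for Statement 9 -/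

namespace QuivData

variable {Q : QuivData} {gens : Set (Pth Q)}

section ListHelpers

variable {α : Type*}

lemma chain'_iff_infix {P : α → α → Prop} {l : List α} :
    List.Chain' P l ↔ ∀ x y, [x, y] <:+: l → P x y := by
  constructor
  · intro h x y hxy
    have := h.infix hxy
    simpa using this
  · intro h
    induction l with
    | nil => exact List.isChain_nil
    | cons x l ih =>
      cases l with
      | nil => exact List.isChain_singleton _
      | cons y r =>
        refine List.isChain_cons_cons.mpr ⟨h x y ⟨[], r, rfl⟩, ih ?_⟩
        intro u v huv
        exact h u v (huv.trans ⟨[x], [], by simp⟩)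

lemma head?_get {l : List α} (h : 0 < l.length) :
    l.head? = some (l.get ⟨0, h⟩) := by
  cases l with
  | nil => simp at h
  | cons a l => rfl

lemma getLast?_get {l : List α} (h : 0 < l.length) :
    l.getLast? = some (l.get ⟨l.length - 1, by omega⟩) := by
  have hne : l ≠ [] := List.length_pos_iff.mp h
  rw [List.getLast?_eq_getLast hne, List.getLast_eq_getElem]
  rfl

end ListHelpers

lemma memL_pair_iff {G : Set (Pth Q)} (h2 : ∀ r ∈ G, r.length = 2) {x y : Q.E} :
    memL G [x, y] ↔ ∃ r ∈ G, r.arrows = [x, y] := by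
  constructor
  · rintro ⟨r, hr, hne, hinf⟩
    refine ⟨r, hr, hinf.sublist.eq_of_length ?_⟩
    have := h2 r hr
    simpa [Pth.length] using this
  · rintro ⟨r, hr, he⟩
    exact ⟨r, hr, by rw [he]; simp, by rw [he]⟩

lemma memL_of_pair_infix {G : Set (Pth Q)} {x y : Q.E} {l : List Q.E}
    (h : memL G [x, y]) (hi : [x, y] <:+: l) : memL G l := by
  obtain ⟨r, hr, hne, hinf⟩ := h
  exact ⟨r, hr, hne, hinf.trans hi⟩

/-! ### Cycle lemmas -/

lemma cycMod {n i : ℕ} (hn : 0 < n) (hi : i < n) : ((i + n - 1) % n + 1) % n = i := by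
  rcases Nat.eq_zero_or_pos i with h0 | h0
  · subst h0
    have e1 : (0 + n - 1) % n = n - 1 := by
      rw [Nat.zero_add]; exact Nat.mod_eq_of_lt (by omega)
    rw [e1, Nat.sub_add_cancel hn, Nat.mod_self]
  · have e1 : (i + n - 1) % n = i - 1 := by
      rw [show i + n - 1 = (i - 1) + n by omega, Nat.add_mod_right]
      exact Nat.mod_eq_of_lt (by omega)
    rw [e1, Nat.sub_add_cancel h0]
    exact Nat.mod_eq_of_lt hi

lemma cyc_ts {c : Pth Q} (hc : IsCycle c) (i : Fin c.arrows.length) :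
    Q.t (c.arrows.get i) = Q.s (nextIdx c.arrows i) := by
  obtain ⟨⟨hch, hhd⟩, hne, _, hclosed⟩ := hc
  have hn : 0 < c.arrows.length := List.length_pos_iff.mpr hne
  rcases Nat.lt_or_ge (i.1 + 1) c.arrows.length with h | h
  · have hx : nextIdx c.arrows i = c.arrows.get ⟨i.1 + 1, h⟩ := by
      unfold nextIdx; congr 1; exact Fin.ext (Nat.mod_eq_of_lt h)
    rw [hx]
    exact List.isChain_iff_getElem.mp hch i.1 (by omega)
  · have hi : i.1 = c.arrows.length - 1 := by have := i.2; omega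
    have h0 : nextIdx c.arrows i = c.arrows.get ⟨0, hn⟩ := by
      unfold nextIdx; congr 1
      exact Fin.ext (by
        show ((i : ℕ) + 1) % c.arrows.length = 0
        rw [show (i : ℕ) + 1 = c.arrows.length by have := i.2; omega, Nat.mod_self])
    have h1 : Q.s (c.arrows.get ⟨0, hn⟩) = c.src := hhd _ (by rw [head?_get hn]; rfl)
    have h2 : Q.t (c.arrows.get i) = c.tgt := by
      show _ = (c.arrows.getLast?).elim c.src Q.t
      rw [getLast?_get hn]
      show Q.t _ = Q.t _
      congr 1
      congr 1
      exact Fin.ext hi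
    rw [h0, h2, hclosed, ← h1]

lemma nextIdx_mem {l : List Q.E} (i : Fin l.length) : nextIdx l i ∈ l := by
  unfold nextIdx; exact List.get_mem _ _

lemma consec_ts {α β : Q.E} (h : ConsecGRC gens α β) :
    Q.t α = Q.s β ∧ memL gens [α, β] := by
  obtain ⟨c, hc, i, h1, h2⟩ := h
  constructor
  · rw [← h1, ← h2]; exact cyc_ts hc.1 i
  · have := hc.2.1 i; rwa [h1, h2] at this

lemma grc_next (hG : IsGentleQuiver Q gens) {a b : Q.E} (hab : Q.t a = Q.s b)
    (hm : memL gens [a, b]) (ha : OnGRC gens a) :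
    OnGRC gens b ∧ ConsecGRC gens a b := by
  obtain ⟨c, hc, hmem⟩ := ha
  obtain ⟨i, hi⟩ := List.mem_iff_get.mp hmem
  have hts : Q.t a = Q.s (nextIdx c.arrows i) := by rw [← hi]; exact cyc_ts hc.1 i
  have hm2 : memL gens [a, nextIdx c.arrows i] := by have := hc.2.1 i; rwa [hi] at this
  have hb : b = nextIdx c.arrows i := hG.2.2.1 a b _ hab hts hm hm2
  subst hb
  exact ⟨⟨c, hc, nextIdx_mem i⟩, ⟨c, hc, i, hi, rfl⟩⟩

lemma grc_prev (hG : IsGentleQuiver Q gens) {a b : Q.E} (hab : Q.t a = Q.s b)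
    (hm : memL gens [a, b]) (hb : OnGRC gens b) :
    OnGRC gens a ∧ ConsecGRC gens a b := by
  obtain ⟨c, hc, hmem⟩ := hb
  obtain ⟨i, hi⟩ := List.mem_iff_get.mp hmem
  have hn : 0 < c.arrows.length := i.pos
  obtain ⟨i', hi'⟩ : ∃ i' : Fin c.arrows.length,
      i' = (⟨(i.1 + c.arrows.length - 1) % c.arrows.length, Nat.mod_lt _ hn⟩ :
        Fin c.arrows.length) := ⟨_, rfl⟩
  have hnext : nextIdx c.arrows i' = c.arrows.get i := by
    unfold nextIdx; congr 1
    subst hi'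
    exact Fin.ext (cycMod hn i.2)
  have hts : Q.t (c.arrows.get i') = Q.s b := by
    rw [cyc_ts hc.1 i', hnext, hi]
  have hm2 : memL gens [c.arrows.get i', b] := by
    have := hc.2.1 i'; rwa [hnext, hi] at this
  have hx : a = c.arrows.get i' := hG.2.2.2 b a _ hab hts hm hm2
  refine ⟨⟨c, hc, by rw [hx]; exact List.get_mem _ _⟩, ⟨c, hc, i', hx.symm, by rw [hnext, hi]⟩⟩

/-! ### CMA quiver edge analysis -/

/-- Underlying arrow of an edge of the CM-Auslander quiver. -/
def und (gens : Set (Pth Q)) : (CMAQuiv Q gens).E → Q.E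
  | Sum.inl a => a.1
  | Sum.inr (Sum.inl a) => a.1
  | Sum.inr (Sum.inr a) => a.1

/-- Edges whose target is a vertex of the original quiver. -/
def QLt (gens : Set (Pth Q)) (x : (CMAQuiv Q gens).E) : Prop :=
  (∃ a, x = Sum.inl a) ∨ ∃ a, x = Sum.inr (Sum.inr a)

/-- Edges whose source is a vertex of the original quiver. -/
def QLs (gens : Set (Pth Q)) (x : (CMAQuiv Q gens).E) : Prop :=
  (∃ a, x = Sum.inl a) ∨ ∃ a, x = Sum.inr (Sum.inl a)

lemma t_eq_of_QLt {x : (CMAQuiv Q gens).E} (h : QLt gens x) :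
    (CMAQuiv Q gens).t x = Sum.inl (Q.t (und gens x)) := by
  rcases h with ⟨a, rfl⟩ | ⟨a, rfl⟩ <;> rfl

lemma s_eq_of_QLs {x : (CMAQuiv Q gens).E} (h : QLs gens x) :
    (CMAQuiv Q gens).s x = Sum.inl (Q.s (und gens x)) := by
  rcases h with ⟨a, rfl⟩ | ⟨a, rfl⟩ <;> rfl

lemma QLt_or (x : (CMAQuiv Q gens).E) :
    QLt gens x ∨ ∃ a, x = Sum.inr (Sum.inl a) := by
  rcases x with a | a | a
  · exact Or.inl (Or.inl ⟨a, rfl⟩)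
  · exact Or.inr ⟨a, rfl⟩
  · exact Or.inl (Or.inr ⟨a, rfl⟩)

lemma QLs_or (x : (CMAQuiv Q gens).E) :
    QLs gens x ∨ ∃ a, x = Sum.inr (Sum.inr a) := by
  rcases x with a | a | a
  · exact Or.inl (Or.inl ⟨a, rfl⟩)
  · exact Or.inl (Or.inr ⟨a, rfl⟩)
  · exact Or.inr ⟨a, rfl⟩

lemma forced_src {w : {a : Q.E // OnGRC gens a}} {e : (CMAQuiv Q gens).E}
    (h : (CMAQuiv Q gens).s e = Sum.inr w) : e = Sum.inr (Sum.inr w) := by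
  rcases e with a | a | a
  · exact absurd h (by simp [CMAQuiv])
  · exact absurd h (by simp [CMAQuiv])
  · have : a = w := Sum.inr_injective h
    rw [this]

lemma forced_tgt {w : {a : Q.E // OnGRC gens a}} {e : (CMAQuiv Q gens).E}
    (h : (CMAQuiv Q gens).t e = Sum.inr w) : e = Sum.inr (Sum.inl w) := by
  rcases e with a | a | a
  · exact absurd h (by simp [CMAQuiv])
  · have : a = w := Sum.inr_injective h
    rw [this]
  · exact absurd h (by simp [CMAQuiv])

lemma injS {x y : (CMAQuiv Q gens).E} (hx : QLs gens x) (hy : QLs gens y)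
    (h : und gens x = und gens y) : x = y := by
  rcases hx with ⟨a, rfl⟩ | ⟨a, rfl⟩ <;> rcases hy with ⟨b, rfl⟩ | ⟨b, rfl⟩ <;>
    simp only [und] at h
  · rw [Subtype.ext h]
  · exfalso; apply a.2; rw [h]; exact b.2
  · exfalso; apply b.2; rw [← h]; exact a.2
  · rw [Subtype.ext h]

lemma injT {x y : (CMAQuiv Q gens).E} (hx : QLt gens x) (hy : QLt gens y)
    (h : und gens x = und gens y) : x = y := by
  rcases hx with ⟨a, rfl⟩ | ⟨a, rfl⟩ <;> rcases hy with ⟨b, rfl⟩ | ⟨b, rfl⟩ <;>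
    simp only [und] at h
  · rw [Subtype.ext h]
  · exfalso; apply a.2; rw [h]; exact b.2
  · exfalso; apply b.2; rw [← h]; exact a.2
  · rw [Subtype.ext h]

lemma ts_iff {x y : (CMAQuiv Q gens).E} (hx : QLt gens x) (hy : QLs gens y) :
    (CMAQuiv Q gens).t x = (CMAQuiv Q gens).s y ↔ Q.t (und gens x) = Q.s (und gens y) := by
  rw [t_eq_of_QLt hx, s_eq_of_QLs hy]
  exact ⟨fun h => Sum.inl_injective h, fun h => congrArg _ h⟩

lemma CMA_len2 : ∀ r ∈ CMAgensG Q gens, r.length = 2 := by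
  rintro r (⟨α, β, hα, hβ, hcon, rfl⟩ | ⟨a, b, ha, hb, hts, hm, rfl⟩) <;> rfl

lemma memL_CMA_iff (hG : IsGentleQuiver Q gens) {x y : (CMAQuiv Q gens).E}
    (hx : QLt gens x) (hy : QLs gens y)
    (hts : Q.t (und gens x) = Q.s (und gens y)) :
    memL (CMAgensG Q gens) [x, y] ↔ memL gens [und gens x, und gens y] := by
  constructor
  · intro h
    obtain ⟨r, hr, he⟩ := (memL_pair_iff CMA_len2).mp h
    rcases hr with ⟨α, β, hα, hβ, hcon, rfl⟩ | ⟨a, b, ha, hb, hts', hm, rfl⟩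
    · simp only [List.cons.injEq, and_true] at he
      injection he with h1 he2; injection he2 with h2
      rw [← h1, ← h2]
      exact (consec_ts hcon).2
    · simp only [List.cons.injEq, and_true] at he
      injection he with h1 he2; injection he2 with h2
      rw [← h1, ← h2]
      exact hm
  · intro hm
    rcases hx with ⟨a, rfl⟩ | ⟨w, rfl⟩
    · -- x = inl a, a not on a GRC
      have hy' : ∃ b : {a : Q.E // ¬ OnGRC gens a}, y = Sum.inl b := by
        rcases hy with ⟨b, rfl⟩ | ⟨b, rfl⟩
        · exact ⟨b, rfl⟩
        · exact absurd ((grc_prev hG hts hm b.2).1) a.2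
      obtain ⟨b, rfl⟩ := hy'
      refine (memL_pair_iff CMA_len2).mpr ⟨⟨Sum.inl (Q.s a.1), [Sum.inl a, Sum.inl b]⟩, ?_, rfl⟩
      exact Or.inr ⟨a.1, b.1, a.2, b.2, hts, hm, rfl⟩
    · -- x = w⁺, w on a GRC
      obtain ⟨hgb, hcon⟩ := grc_next hG hts hm w.2
      have hy' : ∃ b : {a : Q.E // OnGRC gens a}, y = Sum.inr (Sum.inl b) := by
        rcases hy with ⟨b, rfl⟩ | ⟨b, rfl⟩
        · exact absurd hgb b.2
        · exact ⟨b, rfl⟩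
      obtain ⟨b, rfl⟩ := hy'
      refine (memL_pair_iff CMA_len2).mpr
        ⟨⟨Sum.inr w, [Sum.inr (Sum.inr w), Sum.inr (Sum.inl b)]⟩, ?_, rfl⟩
      exact Or.inl ⟨w.1, b.1, w.2, b.2, hcon, rfl⟩


/-- Projection of a relation-free valid walk in the CMA quiver to one in `Q`,
losing at most half the length. -/
lemma key_proj (hG : IsGentleQuiver Q gens) :
    ∀ (n : ℕ) (l : List (CMAQuiv Q gens).E), l.length ≤ n →
      List.Chain' (fun x y => (CMAQuiv Q gens).t x = (CMAQuiv Q gens).s y) l →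
      List.Chain' (fun x y => ¬ memL (CMAgensG Q gens) [x, y]) l →
      ∃ q : List Q.E, List.Chain' (fun a b => Q.t a = Q.s b ∧ ¬ memL gens [a, b]) q ∧
        l.length ≤ 2 * q.length + 1 ∧ ∀ b ∈ q.head?, ∃ e ∈ l.head?, und gens e = b := by
  have step : ∀ (x : (CMAQuiv Q gens).E) (rest : List (CMAQuiv Q gens).E)
      (q' : List Q.E), QLt gens x →
      List.Chain' (fun x y => (CMAQuiv Q gens).t x = (CMAQuiv Q gens).s y) (x :: rest) →
      List.Chain' (fun x y => ¬ memL (CMAgensG Q gens) [x, y]) (x :: rest) →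
      List.Chain' (fun a b => Q.t a = Q.s b ∧ ¬ memL gens [a, b]) q' →
      (∀ b ∈ q'.head?, ∃ e ∈ rest.head?, und gens e = b) →
      List.Chain' (fun a b => Q.t a = Q.s b ∧ ¬ memL gens [a, b]) (und gens x :: q') := by
    intro x rest q' hx hch hng hq1 hq3
    refine List.isChain_cons.mpr ⟨?_, hq1⟩
    intro b hb
    obtain ⟨e, he, rfl⟩ := hq3 b hb
    have hadj : (CMAQuiv Q gens).t x = (CMAQuiv Q gens).s e := (List.isChain_cons.mp hch).1 e he
    have hne : ¬ memL (CMAgensG Q gens) [x, e] := (List.isChain_cons.mp hng).1 e he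
    have hy : QLs gens e := by
      rcases QLs_or e with h | ⟨β, rfl⟩
      · exact h
      · rw [t_eq_of_QLt hx] at hadj
        exact absurd hadj (by simp [CMAQuiv])
    have hts : Q.t (und gens x) = Q.s (und gens e) := (ts_iff hx hy).mp hadj
    exact ⟨hts, fun hm => hne ((memL_CMA_iff hG hx hy hts).mpr hm)⟩
  intro n
  induction n with
  | zero =>
    intro l hl _ _
    have hl0 : l = [] := List.length_eq_zero_iff.mp (by omega)
    subst hl0
    exact ⟨[], List.isChain_nil, by simp, by simp⟩
  | succ n ih =>
    intro l hl hch hng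
    match l with
    | [] => exact ⟨[], List.isChain_nil, by simp, by simp⟩
    | x :: rest =>
      rcases QLt_or x with hx | ⟨α, rfl⟩
      · obtain ⟨q', hq1, hq2, hq3⟩ := ih rest (by simp at hl; omega) hch.tail hng.tail
        refine ⟨und gens x :: q', step x rest q' hx hch hng hq1 hq3, ?_, ?_⟩
        · simp only [List.length_cons] at hq2 ⊢; omega
        · intro b hb
          simp only [List.head?_cons, Option.mem_def, Option.some.injEq] at hb
          exact ⟨x, by simp, hb⟩
      · match rest with
        | [] => exact ⟨[], List.isChain_nil, Nat.le_refl 1, by simp⟩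
        | e :: rest' =>
          have hadj : (CMAQuiv Q gens).t (Sum.inr (Sum.inl α)) = (CMAQuiv Q gens).s e :=
            (List.isChain_cons.mp hch).1 e rfl
          have he : e = Sum.inr (Sum.inr α) := forced_src hadj.symm
          subst he
          obtain ⟨q', hq1, hq2, hq3⟩ := ih rest' (Nat.le_of_succ_le (Nat.le_of_succ_le_succ hl)) hch.tail.tail hng.tail.tail
          have hQL : QLt gens (Sum.inr (Sum.inr α) : (CMAQuiv Q gens).E) := Or.inr ⟨α, rfl⟩
          refine ⟨α.1 :: q', ?_, ?_, ?_⟩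
          · exact step _ rest' q' hQL hch.tail hng.tail hq1 hq3
          · show rest'.length + 1 + 1 ≤ 2 * (q'.length + 1) + 1; omega
          · intro b hb
            simp only [List.head?_cons, Option.mem_def, Option.some.injEq] at hb
            exact ⟨Sum.inr (Sum.inl α), rfl, hb⟩

end QuivData

/-! ## Statement 9 -/

open QuivData in
/-- Corollary 4.6: the CM-Auslander construction applied to a gentle quiver
(splitting the arrows on gentle relation cycles, with Case 1 and Case 2
relations) yields again a gentle quiver; hence the CM-Auslander algebra of a
gentle algebra is gentle. -/
theorem cma_of_gentle_is_gentle (Q : QuivData) (gens : Set (Pth Q))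
    (hG : IsGentleQuiver Q gens) :
    IsGentleQuiver (CMAQuiv Q gens) (CMAgensG Q gens) := by
  have hfwd := hG.1.2.2.2.2.1
  have hbwd := hG.1.2.2.2.2.2.1
  obtain ⟨N₀, hN⟩ := hG.1.2.2.2.2.2.2
  have hdeg := hG.1.2.2.2.1
  haveI hV : Finite Q.V := hG.1.1
  haveI hE : Finite Q.E := hG.1.2.1
  have hgfwd := hG.2.2.1
  have hgbwd := hG.2.2.2
  -- helper: an edge with source `Sum.inl v` is Q-level-source
  have QLs_of : ∀ {v : Q.V} {e : (CMAQuiv Q gens).E},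
      (CMAQuiv Q gens).s e = Sum.inl v → QLs gens e := by
    intro v e h
    rcases QLs_or e with h' | ⟨a, rfl⟩
    · exact h'
    · exact absurd h (by simp [CMAQuiv])
  have QLt_of : ∀ {v : Q.V} {e : (CMAQuiv Q gens).E},
      (CMAQuiv Q gens).t e = Sum.inl v → QLt gens e := by
    intro v e h
    rcases QLt_or e with h' | ⟨a, rfl⟩
    · exact h'
    · exact absurd h (by simp [CMAQuiv])
  refine ⟨⟨?_, ?_, ?_, ?_, ?_, ?_, ?_⟩, CMA_len2, ?_, ?_⟩
  · -- finitely many vertices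
    show Finite (Q.V ⊕ {a : Q.E // OnGRC gens a})
    infer_instance
  · -- finitely many arrows
    show Finite ({a : Q.E // ¬ OnGRC gens a} ⊕
      ({a : Q.E // OnGRC gens a} ⊕ {a : Q.E // OnGRC gens a}))
    infer_instance
  · -- generators are valid of length ≥ 2
    rintro r (⟨α, β, hα, hβ, hcon, rfl⟩ | ⟨a, b, ha, hb, hts, hm, rfl⟩)
    · refine ⟨⟨?_, ?_⟩, ?_⟩
      · exact List.isChain_cons_cons.mpr ⟨congrArg Sum.inl (consec_ts hcon).1, List.isChain_singleton _⟩
      · intro e he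
        simp only [List.head?_cons, Option.mem_def, Option.some.injEq] at he
        cases he; rfl
      · exact le_refl 2
    · refine ⟨⟨?_, ?_⟩, ?_⟩
      · exact List.isChain_cons_cons.mpr ⟨congrArg Sum.inl hts, List.isChain_singleton _⟩
      · intro e he
        simp only [List.head?_cons, Option.mem_def, Option.some.injEq] at he
        cases he; rfl
      · exact le_refl 2
  · -- degree bounds
    rintro (v | w)
    · constructor
      · refine le_trans (Set.ncard_le_ncard_of_injOn (und gens) ?_ ?_ (Set.toFinite _))
          (hdeg v).1
        · rintro (a | a | a) he
          · exact Sum.inl_injective he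
          · exact Sum.inl_injective he
          · exact absurd he Sum.inr_ne_inl
        · intro e₁ h₁ e₂ h₂ hu
          exact injS (QLs_of h₁) (QLs_of h₂) hu
      · refine le_trans (Set.ncard_le_ncard_of_injOn (und gens) ?_ ?_ (Set.toFinite _))
          (hdeg v).2
        · rintro (a | a | a) he
          · exact Sum.inl_injective he
          · exact absurd he Sum.inr_ne_inl
          · exact Sum.inl_injective he
        · intro e₁ h₁ e₂ h₂ hu
          exact injT (QLt_of h₁) (QLt_of h₂) hu
    · constructor
      · have hset : {e : (CMAQuiv Q gens).E | (CMAQuiv Q gens).s e = Sum.inr w} =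
            {Sum.inr (Sum.inr w)} := by
          ext e
          simp only [Set.mem_setOf_eq, Set.mem_singleton_iff]
          constructor
          · exact forced_src
          · rintro rfl; rfl
        rw [hset]; exact (Set.ncard_singleton _).le.trans (by norm_num)
      · have hset : {e : (CMAQuiv Q gens).E | (CMAQuiv Q gens).t e = Sum.inr w} =
            {Sum.inr (Sum.inl w)} := by
          ext e
          simp only [Set.mem_setOf_eq, Set.mem_singleton_iff]
          constructor
          · exact forced_tgt
          · rintro rfl; rfl
        rw [hset]; exact (Set.ncard_singleton _).le.trans (by norm_num)
  · -- string condition, forward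
    intro a b c htb htc hnb hnc
    rcases QLt_or a with ha | ⟨α, rfl⟩
    · rw [t_eq_of_QLt ha] at htb htc
      have hbQ : QLs gens b := QLs_of htb.symm
      have hcQ : QLs gens c := QLs_of htc.symm
      have h1 : Q.t (und gens a) = Q.s (und gens b) := by
        rw [s_eq_of_QLs hbQ] at htb; exact Sum.inl_injective htb
      have h2 : Q.t (und gens a) = Q.s (und gens c) := by
        rw [s_eq_of_QLs hcQ] at htc; exact Sum.inl_injective htc
      have hnb' : ¬ memL gens [und gens a, und gens b] :=
        fun h => hnb ((memL_CMA_iff hG ha hbQ h1).mpr h)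
      have hnc' : ¬ memL gens [und gens a, und gens c] :=
        fun h => hnc ((memL_CMA_iff hG ha hcQ h2).mpr h)
      exact injS hbQ hcQ (hfwd _ _ _ h1 h2 hnb' hnc')
    · rw [forced_src htb.symm, forced_src htc.symm]
  · -- string condition, backward
    intro a b c htb htc hnb hnc
    rcases QLs_or a with ha | ⟨α, rfl⟩
    · rw [s_eq_of_QLs ha] at htb htc
      have hbQ : QLt gens b := QLt_of htb
      have hcQ : QLt gens c := QLt_of htc
      have h1 : Q.t (und gens b) = Q.s (und gens a) := by
        rw [t_eq_of_QLt hbQ] at htb; exact Sum.inl_injective htb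
      have h2 : Q.t (und gens c) = Q.s (und gens a) := by
        rw [t_eq_of_QLt hcQ] at htc; exact Sum.inl_injective htc
      have hnb' : ¬ memL gens [und gens b, und gens a] :=
        fun h => hnb ((memL_CMA_iff hG hbQ ha h1).mpr h)
      have hnc' : ¬ memL gens [und gens c, und gens a] :=
        fun h => hnc ((memL_CMA_iff hG hcQ ha h2).mpr h)
      exact injT hbQ hcQ (hbwd (und gens a) (und gens b) (und gens c) h1 h2 hnb' hnc')
    · rw [forced_tgt htb, forced_tgt htc]
  · -- boundedness
    refine ⟨2 * N₀ + 2, ?_⟩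
    intro p hp hlen
    by_contra hmem
    have hng : List.Chain' (fun x y => ¬ memL (CMAgensG Q gens) [x, y]) p.arrows := by
      rw [chain'_iff_infix]
      intro x y hxy hm
      exact hmem (memL_of_pair_infix hm hxy)
    obtain ⟨q, hq1, hq2, -⟩ := key_proj hG p.arrows.length p.arrows le_rfl hp.1 hng
    have hql : N₀ + 1 ≤ q.length := by
      have he : p.arrows.length = p.length := rfl
      omega
    rcases q with _ | ⟨b, qt⟩
    · simp at hql
    · have hPv : (⟨Q.s b, b :: qt⟩ : Pth Q).valid := by
        constructor
        · exact List.IsChain.imp (fun a b h => h.1) hq1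
        · intro e he
          simp only [List.head?_cons, Option.mem_def, Option.some.injEq] at he
          subst he; rfl
      obtain ⟨r, hr, hrne, hri⟩ := hN ⟨Q.s b, b :: qt⟩ hPv
        (by simp only [Pth.length, List.length_cons] at hql ⊢; omega)
      obtain ⟨u, v, huv⟩ := List.length_eq_two.mp
        (by simpa [Pth.length] using hG.2.1 r hr)
      rw [huv] at hri
      exact (chain'_iff_infix.mp hq1 u v hri).2 ⟨r, hr, by rw [huv]; simp, by rw [huv]⟩
  · -- gentle condition, forward
    intro a b c htb htc hmb hmc
    rcases QLt_or a with ha | ⟨α, rfl⟩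
    · rw [t_eq_of_QLt ha] at htb htc
      have hbQ : QLs gens b := QLs_of htb.symm
      have hcQ : QLs gens c := QLs_of htc.symm
      have h1 : Q.t (und gens a) = Q.s (und gens b) := by
        rw [s_eq_of_QLs hbQ] at htb; exact Sum.inl_injective htb
      have h2 : Q.t (und gens a) = Q.s (und gens c) := by
        rw [s_eq_of_QLs hcQ] at htc; exact Sum.inl_injective htc
      have hmb' := (memL_CMA_iff hG ha hbQ h1).mp hmb
      have hmc' := (memL_CMA_iff hG ha hcQ h2).mp hmc
      exact injS hbQ hcQ (hgfwd _ _ _ h1 h2 hmb' hmc')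
    · rw [forced_src htb.symm, forced_src htc.symm]
  · -- gentle condition, backward
    intro a b c htb htc hmb hmc
    rcases QLs_or a with ha | ⟨α, rfl⟩
    · rw [s_eq_of_QLs ha] at htb htc
      have hbQ : QLt gens b := QLt_of htb
      have hcQ : QLt gens c := QLt_of htc
      have h1 : Q.t (und gens b) = Q.s (und gens a) := by
        rw [t_eq_of_QLt hbQ] at htb; exact Sum.inl_injective htb
      have h2 : Q.t (und gens c) = Q.s (und gens a) := by
        rw [t_eq_of_QLt hcQ] at htc; exact Sum.inl_injective htc
      have hmb' := (memL_CMA_iff hG hbQ ha h1).mp hmb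
      have hmc' := (memL_CMA_iff hG hcQ ha h2).mp hmc
      exact injT hbQ hcQ (hgbwd (und gens a) (und gens b) (und gens c) h1 h2 hmb' hmc')
    · rw [forced_tgt htb, forced_tgt htc]
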